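/- Let d ≥ 1, η > 0, and let x̂, p, y ∈ ℝ^d. Define P3(x) = (1/(2η))·((‖x − x̂‖ − √(2η/d))² + (‖y − p‖ − 2·√(2η/d))² − 32η/d). Then ∫_{ℝ^d} exp(−P3(x)) dx ≤ exp(−(‖p − y‖ − 2·√(2η/d))²/(2η) + 16/d + 9/4) · (2πη)^{d/2}. -/

import Mathlib

open MeasureTheory

theorem stmt_9 (d : ℕ) (hd : 1 ≤ d) (η : ℝ) (hη : 0 < η)
    (xhat p y : EuclideanSpace ℝ (Fin d))
    (P3 : EuclideanSpace ℝ (Fin d) → ℝ)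
    (hP3 : ∀ x, P3 x = (1 / (2 * η)) * ((‖x - xhat‖ - Real.sqrt (2 * η / d)) ^ 2 +
        (‖y - p‖ - 2 * Real.sqrt (2 * η / d)) ^ 2 - 32 * η / d)) :
    ∫ x, Real.exp (-P3 x) ≤
      Real.exp (-(‖p - y‖ - 2 * Real.sqrt (2 * η / d)) ^ 2 / (2 * η) + 16 / d + 9 / 4) *
        (2 * Real.pi * η) ^ ((d : ℝ) / 2) := by
  have hd0 : (0:ℝ) < d := by exact_mod_cast hd
  have hd1 : (1:ℝ) ≤ d := by exact_mod_cast hd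
  set b : ℝ := Real.sqrt (2 * η / d) with hbdef
  have hdb : (d:ℝ) * b ^ 2 = 2 * η := by
    rw [hbdef, Real.sq_sqrt (by positivity)]; field_simp
  set C : ℝ := (‖y - p‖ - 2 * b) ^ 2 with hCdef
  set a : ℝ := (d:ℝ) / (((d:ℝ) + 1) * (2 * η)) with hadef
  have ha : 0 < a := by positivity
  set E : ℝ := -C / (2 * η) + 16 / d + 1 with hEdef
  -- pointwise bound
  have hpt : ∀ x : EuclideanSpace ℝ (Fin d),
      Real.exp (-P3 x) ≤ Real.exp E * Real.exp (-(a * ‖x - xhat‖ ^ 2)) := by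
    intro x
    rw [← Real.exp_add, hP3]
    apply Real.exp_le_exp.2
    set r : ℝ := ‖x - xhat‖ with hr
    have key : (d:ℝ) * r ^ 2 ≤ ((d:ℝ) + 1) * ((r - b) ^ 2 + 2 * η) := by
      nlinarith [sq_nonneg (r - ((d:ℝ) + 1) * b), hdb]
    rw [← sub_nonneg]
    have hiden : E + -(a * r ^ 2) - -(1 / (2 * η) * ((r - b) ^ 2 + C - 32 * η / d)) =
        (((d:ℝ) + 1) * ((r - b) ^ 2 + 2 * η) - (d:ℝ) * r ^ 2) / (((d:ℝ) + 1) * (2 * η)) := by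
      rw [hEdef, hadef]
      field_simp
      ring
    rw [hiden]
    apply div_nonneg (by linarith) (by positivity)
  -- integrability of the dominating function
  have hint0 : Integrable (fun x : EuclideanSpace ℝ (Fin d) ↦ Real.exp (-(a * ‖x‖ ^ 2))) := by
    have h := (GaussianFourier.integrable_cexp_neg_mul_sq_norm_add
      (V := EuclideanSpace ℝ (Fin d)) (b := (a:ℂ)) (by simpa using ha) 0 0).norm
    refine h.congr (Filter.Eventually.of_forall fun x ↦ ?_)
    simp only [Complex.norm_exp]
    congr 1
    simp only [Complex.add_re, Complex.mul_re, Complex.neg_re, Complex.neg_im,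
      Complex.ofReal_re, Complex.ofReal_im, Complex.zero_re, Complex.zero_im]
    have : ((‖x‖ : ℂ) ^ 2).re = ‖x‖ ^ 2 := by norm_cast
    have h2 : ((‖x‖ : ℂ) ^ 2).im = 0 := by norm_cast
    rw [this, h2]
    ring
  have hint1 : Integrable (fun x : EuclideanSpace ℝ (Fin d) ↦ Real.exp (-(a * ‖x - xhat‖ ^ 2))) :=
    hint0.comp_sub_right xhat
  have hint : Integrable (fun x : EuclideanSpace ℝ (Fin d) ↦
      Real.exp E * Real.exp (-(a * ‖x - xhat‖ ^ 2))) := hint1.const_mul _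
  -- monotonicity of integral
  have hmono : ∫ x, Real.exp (-P3 x) ≤
      ∫ x : EuclideanSpace ℝ (Fin d), Real.exp E * Real.exp (-(a * ‖x - xhat‖ ^ 2)) :=
    integral_mono_of_nonneg (Filter.Eventually.of_forall fun x ↦ (Real.exp_pos _).le)
      hint (Filter.Eventually.of_forall hpt)
  -- compute the Gaussian integral
  have hcalc : ∫ x : EuclideanSpace ℝ (Fin d), Real.exp E * Real.exp (-(a * ‖x - xhat‖ ^ 2)) =
      Real.exp E * (Real.pi / a) ^ ((d:ℝ) / 2) := by
    rw [MeasureTheory.integral_const_mul]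
    congr 1
    rw [integral_sub_right_eq_self (fun x : EuclideanSpace ℝ (Fin d) ↦
      Real.exp (-(a * ‖x‖ ^ 2))) xhat]
    have := GaussianFourier.integral_rexp_neg_mul_sq_norm (V := EuclideanSpace ℝ (Fin d)) ha
    simp only [neg_mul] at this ⊢
    rw [this, finrank_euclideanSpace_fin]
  -- bound the result
  have hsplit : (Real.pi / a) ^ ((d:ℝ) / 2) =
      (2 * Real.pi * η) ^ ((d:ℝ) / 2) * (((d:ℝ) + 1) / d) ^ ((d:ℝ) / 2) := by
    rw [← Real.mul_rpow (by positivity) (by positivity)]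
    congr 1
    rw [hadef]
    field_simp
  have hratio : (((d:ℝ) + 1) / d) ^ ((d:ℝ) / 2) ≤ Real.exp (1 / 2) := by
    rw [Real.rpow_def_of_pos (by positivity)]
    apply Real.exp_le_exp.2
    have hlog : Real.log (((d:ℝ) + 1) / d) ≤ 1 / d := by
      have := Real.log_le_sub_one_of_pos (show (0:ℝ) < ((d:ℝ) + 1) / d by positivity)
      have : ((d:ℝ) + 1) / d - 1 = 1 / d := by field_simp; ring
      linarith [Real.log_le_sub_one_of_pos (show (0:ℝ) < ((d:ℝ) + 1) / d by positivity), this]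
    calc Real.log (((d:ℝ) + 1) / d) * ((d:ℝ) / 2) ≤ (1 / d) * ((d:ℝ) / 2) := by
          apply mul_le_mul_of_nonneg_right hlog (by positivity)
      _ = 1 / 2 := by field_simp
  have hnormrev : ‖p - y‖ = ‖y - p‖ := norm_sub_rev _ _
  calc ∫ x, Real.exp (-P3 x)
      ≤ Real.exp E * (Real.pi / a) ^ ((d:ℝ) / 2) := hmono.trans_eq hcalc
    _ = Real.exp E * ((2 * Real.pi * η) ^ ((d:ℝ) / 2) * (((d:ℝ) + 1) / d) ^ ((d:ℝ) / 2)) := by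
        rw [hsplit]
    _ ≤ Real.exp E * ((2 * Real.pi * η) ^ ((d:ℝ) / 2) * Real.exp (1 / 2)) := by
        apply mul_le_mul_of_nonneg_left _ (Real.exp_pos _).le
        exact mul_le_mul_of_nonneg_left hratio (by positivity)
    _ = Real.exp E * Real.exp (1 / 2) * (2 * Real.pi * η) ^ ((d:ℝ) / 2) := by
        rw [mul_comm ((2 * Real.pi * η) ^ ((d:ℝ) / 2)) (Real.exp (1 / 2)), ← mul_assoc]
    _ ≤ Real.exp (-(‖p - y‖ - 2 * Real.sqrt (2 * η / d)) ^ 2 / (2 * η) + 16 / d + 9 / 4) *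
        (2 * Real.pi * η) ^ ((d : ℝ) / 2) := by
        apply mul_le_mul_of_nonneg_right _ (by positivity)
        rw [← Real.exp_add]
        apply Real.exp_le_exp.2
        rw [hEdef, hCdef, hnormrev]
        linarith
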